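/- Let a ∈ C¹((0,∞)) be positive with i_a = inf_{t>0} t a'(t)/a(t) ≥ −1, and suppose b(t) = a(t)t extends to a C¹ function on [0,∞) with b(0)=0. Let u ∈ C³(Ω, ℝᴺ). Then on {∇u ≠ 0}: |div(a(|∇u|)∇u)|² = div[a(|∇u|)²((Δu)ᵀ∇u − (1/2)∇|∇u|²)] + a(|∇u|)²[|∇²u|² + 2Q(|∇u|)|∇|∇u||² + Q(|∇u|)²|(∇u/|∇u|)(∇|∇u|)ᵀ|²], where Q(t) = t a'(t)/a(t). -/

import Mathlib

noncomputable section

/-- Partial derivative of `f` at `x` in the `j`-th coordinate direction. -/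
def pd {n : ℕ} (j : Fin n) (f : (Fin n → ℝ) → ℝ) (x : Fin n → ℝ) : ℝ :=
  fderiv ℝ f x (Pi.single j 1)

namespace PDH

variable {n : ℕ} {f g : (Fin n → ℝ) → ℝ} {x : Fin n → ℝ} {j i : Fin n}

lemma pd_congr (h : f =ᶠ[nhds x] g) : pd j f x = pd j g x := by
  unfold pd; rw [h.fderiv_eq]

lemma pd_add (hf : DifferentiableAt ℝ f x) (hg : DifferentiableAt ℝ g x) :
    pd j (fun y => f y + g y) x = pd j f x + pd j g x := by
  unfold pd; rw [fderiv_fun_add hf hg]; simp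

lemma pd_sub (hf : DifferentiableAt ℝ f x) (hg : DifferentiableAt ℝ g x) :
    pd j (fun y => f y - g y) x = pd j f x - pd j g x := by
  unfold pd; rw [fderiv_fun_sub hf hg]; simp

lemma pd_mul (hf : DifferentiableAt ℝ f x) (hg : DifferentiableAt ℝ g x) :
    pd j (fun y => f y * g y) x = pd j f x * g x + f x * pd j g x := by
  unfold pd; rw [fderiv_fun_mul hf hg]; simp; ring

lemma pd_const_mul (hf : DifferentiableAt ℝ f x) (c : ℝ) :
    pd j (fun y => c * f y) x = c * pd j f x := by
  unfold pd; rw [fderiv_const_mul hf]; simp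

lemma pd_sum {ι : Type*} (s : Finset ι) (F : ι → (Fin n → ℝ) → ℝ)
    (hF : ∀ i ∈ s, DifferentiableAt ℝ (F i) x) :
    pd j (fun y => ∑ i ∈ s, F i y) x = ∑ i ∈ s, pd j (F i) x := by
  unfold pd; rw [fderiv_fun_sum hF]; simp

lemma pd_sq (hf : DifferentiableAt ℝ f x) :
    pd j (fun y => f y ^ 2) x = 2 * f x * pd j f x := by
  have : (fun y => f y ^ 2) = fun y => f y * f y := by funext y; ring
  rw [this, pd_mul hf hf]; ring

lemma pd_comp {a : ℝ → ℝ} (ha : DifferentiableAt ℝ a (f x)) (hf : DifferentiableAt ℝ f x) :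
    pd j (fun y => a (f y)) x = deriv a (f x) * pd j f x := by
  unfold pd
  have h : HasFDerivAt (fun y => a (f y)) (deriv a (f x) • fderiv ℝ f x) x :=
    (ha.hasDerivAt).comp_hasFDerivAt x hf.hasFDerivAt
  rw [h.fderiv]; simp

lemma contDiffAt_pd {m : ℕ} (hf : ContDiffAt ℝ (m + 1 : ℕ) f x) :
    ContDiffAt ℝ (m : ℕ) (pd j f) x := by
  have h : ContDiffAt ℝ (m : ℕ) (fderiv ℝ f) x := hf.fderiv_right (by norm_cast)
  exact h.clm_apply contDiffAt_const

lemma pd_pd (hf : DifferentiableAt ℝ (fderiv ℝ f) x) :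
    pd i (fun y => pd j f y) x
      = fderiv ℝ (fderiv ℝ f) x (Pi.single i 1) (Pi.single j 1) := by
  unfold pd
  rw [fderiv_clm_apply hf (differentiableAt_const _)]
  simp

lemma pd_comm (hf : ContDiffAt ℝ 2 f x) :
    pd i (fun y => pd j f y) x = pd j (fun y => pd i f y) x := by
  have hd : DifferentiableAt ℝ (fderiv ℝ f) x := by
    have : ContDiffAt ℝ (1 : ℕ) (fderiv ℝ f) x := hf.fderiv_right (by norm_num)
    exact this.differentiableAt (by norm_num)
  rw [pd_pd hd, pd_pd hd, (hf.isSymmSndFDerivAt (by norm_num)).eq]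

end PDH

open PDH in
theorem stmt12 {n N : ℕ} (hn : 2 ≤ n) (hN : 1 ≤ N)
    (Ω : Set (Fin n → ℝ)) (hΩ : IsOpen Ω)
    (u : Fin N → (Fin n → ℝ) → ℝ)
    (hu : ∀ α, ContDiffOn ℝ 3 (u α) Ω)
    (a : ℝ → ℝ) (ha : ContDiffOn ℝ 1 a (Set.Ioi 0))
    (hapos : ∀ t > 0, 0 < a t)
    (hia : ∀ t > 0, -1 ≤ t * deriv a t / a t)
    (b : ℝ → ℝ) (hb : ∀ t > 0, b t = a t * t) (hb0 : b 0 = 0)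
    (hbC1 : ContDiffOn ℝ 1 b (Set.Ici 0))
    (Q : ℝ → ℝ) (hQ : ∀ t > 0, Q t = t * deriv a t / a t)
    (gn : (Fin n → ℝ) → ℝ)
    (hgn : ∀ y, gn y = Real.sqrt (∑ α, ∑ j, (pd j (u α) y) ^ 2)) :
    ∀ x ∈ Ω, gn x ≠ 0 →
      ∑ α, (∑ j, pd j (fun y => a (gn y) * pd j (u α) y) x) ^ 2
        = (∑ j, pd j (fun y => (a (gn y)) ^ 2 *
              ((∑ β, (∑ k, pd k (fun z => pd k (u β) z) y) * pd j (u β) y)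
                - (1/2) * pd j (fun z => ∑ β, ∑ k, (pd k (u β) z) ^ 2) y)) x)
          + (a (gn x)) ^ 2 *
            ((∑ α, ∑ i, ∑ j, (pd i (fun y => pd j (u α) y) x) ^ 2)
              + 2 * Q (gn x) * (∑ j, (pd j gn x) ^ 2)
              + Q (gn x) ^ 2 * ∑ α, (∑ j, (pd j (u α) x / gn x) * pd j gn x) ^ 2) := by
  intro x hx h0
  -- basic regularity
  have h3 : ∀ α, ContDiffAt ℝ 3 (u α) x := fun α => (hu α).contDiffAt (hΩ.mem_nhds hx)
  have h3' : ∀ α, ContDiffAt ℝ ((2:ℕ) + 1 : ℕ) (u α) x := by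
    intro α; have := h3 α; norm_num at this ⊢; exact_mod_cast this
  have hP2 : ∀ α k, ContDiffAt ℝ (2:ℕ) (pd k (u α)) x := fun α k => contDiffAt_pd (h3' α)
  have hP2' : ∀ α k, ContDiffAt ℝ ((1:ℕ) + 1 : ℕ) (pd k (u α)) x := by
    intro α k; exact_mod_cast hP2 α k
  have hPd : ∀ α k, DifferentiableAt ℝ (pd k (u α)) x :=
    fun α k => (hP2 α k).differentiableAt (by norm_num)
  have hPP1 : ∀ α j k, ContDiffAt ℝ (1:ℕ) (pd j (pd k (u α))) x :=
    fun α j k => contDiffAt_pd (hP2' α k)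
  have hPPd : ∀ α j k, DifferentiableAt ℝ (pd j (pd k (u α))) x :=
    fun α j k => (hPP1 α j k).differentiableAt (by norm_num)
  -- the squared-gradient function
  set g2 : (Fin n → ℝ) → ℝ := fun y => ∑ β, ∑ k, (pd k (u β) y) ^ 2 with hg2def
  have hgnfun : gn = fun y => Real.sqrt (g2 y) := funext hgn
  have hg2C2 : ContDiffAt ℝ (2:ℕ) g2 x := by
    apply ContDiffAt.sum; intro β _; apply ContDiffAt.sum; intro k _
    exact (hP2 β k).pow 2
  have hg2d : DifferentiableAt ℝ g2 x := hg2C2.differentiableAt (by norm_num)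
  have hg2pos : 0 < g2 x := by
    by_contra h
    exact h0 (by rw [hgn x]; exact Real.sqrt_eq_zero'.mpr (le_of_not_gt h))
  have hgnx : 0 < gn x := by rw [hgn x]; exact Real.sqrt_pos.mpr hg2pos
  have hgnF : HasFDerivAt gn ((1/(2 * gn x)) • fderiv ℝ g2 x) x := by
    have h := (Real.hasDerivAt_sqrt (ne_of_gt hg2pos)).comp_hasFDerivAt x hg2d.hasFDerivAt
    rw [hgnfun]
    exact h
  have hgnd : DifferentiableAt ℝ gn x := hgnF.differentiableAt
  have hpdg2 : ∀ j, pd j g2 x = 2 * gn x * pd j gn x := by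
    intro j
    have : pd j gn x = (1/(2 * gn x)) * pd j g2 x := by
      unfold pd; rw [hgnF.fderiv]; simp
    rw [this]; field_simp
  -- facts about a
  have had : DifferentiableAt ℝ a (gn x) :=
    (ha.differentiableOn one_ne_zero).differentiableAt (isOpen_Ioi.mem_nhds hgnx)
  have hagnd : DifferentiableAt ℝ (fun y => a (gn y)) x := had.comp x hgnd
  have ha2d : DifferentiableAt ℝ (fun y => (a (gn y)) ^ 2) x := hagnd.pow 2
  have hpda : ∀ j, pd j (fun y => a (gn y)) x = deriv a (gn x) * pd j gn x :=
    fun j => pd_comp had hgnd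
  have hpda2 : ∀ j, pd j (fun y => (a (gn y)) ^ 2) x
      = 2 * a (gn x) * (deriv a (gn x) * pd j gn x) := by
    intro j
    rw [pd_sq hagnd, hpda j]
  -- LHS expansion
  have eL : ∀ α j, pd j (fun y => a (gn y) * pd j (u α) y) x
      = deriv a (gn x) * pd j gn x * pd j (u α) x + a (gn x) * pd j (pd j (u α)) x := by
    intro α j
    rw [pd_mul hagnd (hPd α j), hpda j]
  -- differentiability of the divergence-term ingredients
  have hLd : ∀ β, DifferentiableAt ℝ (fun y => ∑ k, pd k (pd k (u β)) y) x := by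
    intro β
    exact DifferentiableAt.fun_sum (fun k _ => hPPd β k k)
  have hSd : ∀ j, DifferentiableAt ℝ
      (fun y => ∑ β, (∑ k, pd k (pd k (u β)) y) * pd j (u β) y) x := by
    intro j
    exact DifferentiableAt.fun_sum (fun β _ => (hLd β).mul (hPd β j))
  have hg2C2' : ContDiffAt ℝ ((1:ℕ) + 1 : ℕ) g2 x := by exact_mod_cast hg2C2
  have hT1 : ∀ j, ContDiffAt ℝ (1:ℕ) (pd j g2) x := fun j => contDiffAt_pd hg2C2'
  have hTd : ∀ j, DifferentiableAt ℝ (pd j g2) x :=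
    fun j => (hT1 j).differentiableAt (by norm_num)
  -- second-order expansion of pd j g2
  have hev2 : ∀ᶠ y in nhds x, ∀ β k, DifferentiableAt ℝ (pd k (u β)) y := by
    rw [Filter.eventually_all]
    intro β
    rw [Filter.eventually_all]
    intro k
    exact ((hP2 β k).eventually (by simp)).mono
      (fun y hy => hy.differentiableAt (by norm_num))
  have hTev : ∀ j, (pd j g2) =ᶠ[nhds x]
      fun y => ∑ β, ∑ k, 2 * pd k (u β) y * pd j (pd k (u β)) y := by
    intro j
    filter_upwards [hev2] with y hy
    rw [hg2def]
    rw [pd_sum _ _ (fun β _ => DifferentiableAt.fun_sum (fun k _ => ((hy β k).fun_pow 2)))]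
    refine Finset.sum_congr rfl (fun β _ => ?_)
    rw [pd_sum _ _ (fun k _ => ((hy β k).fun_pow 2))]
    refine Finset.sum_congr rfl (fun k _ => ?_)
    rw [pd_sq (hy β k)]
  have e2c : ∀ j, pd j (pd j g2) x
      = ∑ β, ∑ k, (2 * pd j (pd k (u β)) x * pd j (pd k (u β)) x
          + 2 * pd k (u β) x * pd j (pd j (pd k (u β))) x) := by
    intro j
    rw [pd_congr (hTev j)]
    rw [pd_sum _ _ (fun β _ => DifferentiableAt.fun_sum
      (fun k _ => ((hPd β k).const_mul 2).fun_mul (hPPd β j k)))]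
    refine Finset.sum_congr rfl (fun β _ => ?_)
    rw [pd_sum _ _ (fun k _ => ((hPd β k).const_mul 2).fun_mul (hPPd β j k))]
    refine Finset.sum_congr rfl (fun k _ => ?_)
    rw [pd_mul ((hPd β k).const_mul 2) (hPPd β j k), pd_const_mul (hPd β k) 2]
  -- expansion of the divergence of S
  have e2b : ∀ j, pd j (fun y => ∑ β, (∑ k, pd k (pd k (u β)) y) * pd j (u β) y) x
      = ∑ β, ((∑ k, pd j (pd k (pd k (u β))) x) * pd j (u β) x
          + (∑ k, pd k (pd k (u β)) x) * pd j (pd j (u β)) x) := by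
    intro j
    rw [pd_sum _ _ (fun β _ => (hLd β).fun_mul (hPd β j))]
    refine Finset.sum_congr rfl (fun β _ => ?_)
    rw [pd_mul (hLd β) (hPd β j),
      pd_sum _ _ (fun k _ => hPPd β k k)]
  -- full expansion of each divergence summand
  have e_div : ∀ j, pd j (fun y => (a (gn y)) ^ 2 *
        ((∑ β, (∑ k, pd k (pd k (u β)) y) * pd j (u β) y)
          - (1/2) * pd j g2 y)) x
      = 2 * a (gn x) * (deriv a (gn x) * pd j gn x) *
          ((∑ β, (∑ k, pd k (pd k (u β)) x) * pd j (u β) x) - (1/2) * (2 * gn x * pd j gn x))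
        + (a (gn x)) ^ 2 *
          ((∑ β, ((∑ k, pd j (pd k (pd k (u β))) x) * pd j (u β) x
              + (∑ k, pd k (pd k (u β)) x) * pd j (pd j (u β)) x))
            - (1/2) * (∑ β, ∑ k, (2 * pd j (pd k (u β)) x * pd j (pd k (u β)) x
                + 2 * pd k (u β) x * pd j (pd j (pd k (u β))) x))) := by
    intro j
    rw [pd_mul ha2d ((hSd j).fun_sub ((hTd j).const_mul (1/2))),
      pd_sub (hSd j) ((hTd j).const_mul (1/2)),
      pd_const_mul (hTd j) (1/2), hpda2 j, e2b j, e2c j, hpdg2 j]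
  -- third-derivative symmetry
  have hev3 : ∀ᶠ y in nhds x, ∀ β, ContDiffAt ℝ 2 (u β) y := by
    rw [Filter.eventually_all]
    intro β
    exact ((h3 β).eventually (by simp)).mono (fun y hy => hy.of_le (by norm_num))
  have hswap : ∀ β (j k : Fin n),
      (pd j (pd k (u β))) =ᶠ[nhds x] (pd k (pd j (u β))) := by
    intro β j k
    filter_upwards [hev3] with y hy
    exact pd_comm (hy β)
  have F3 : ∀ β, ∑ j, (∑ k, pd j (pd k (pd k (u β))) x) * pd j (u β) x
      = ∑ j, ∑ k, pd k (u β) x * pd j (pd j (pd k (u β))) x := by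
    intro β
    have step : ∀ j k : Fin n,
        pd j (pd k (pd k (u β))) x = pd k (pd k (pd j (u β))) x := by
      intro j k
      calc pd j (pd k (pd k (u β))) x
          = pd k (pd j (pd k (u β))) x := pd_comm (hP2 β k)
        _ = pd k (pd k (pd j (u β))) x := pd_congr (hswap β j k)
    calc ∑ j, (∑ k, pd j (pd k (pd k (u β))) x) * pd j (u β) x
        = ∑ j, ∑ k, pd k (pd k (pd j (u β))) x * pd j (u β) x := by
          refine Finset.sum_congr rfl (fun j _ => ?_)
          rw [Finset.sum_mul]
          exact Finset.sum_congr rfl (fun k _ => by rw [step j k])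
      _ = ∑ k, ∑ j, pd k (pd k (pd j (u β))) x * pd j (u β) x := Finset.sum_comm
      _ = ∑ j, ∑ k, pd k (u β) x * pd j (pd j (pd k (u β))) x := by
          exact Finset.sum_congr rfl (fun j _ =>
            Finset.sum_congr rfl (fun k _ => by ring))
  rw [hQ (gn x) hgnx]
  simp only [eL, e_div]
  have eta2 : ∀ (α : Fin N) (i j : Fin n),
      pd i (fun y => pd j (u α) y) x = pd i (pd j (u α)) x := fun _ _ _ => rfl
  simp only [eta2]
  have hAne : a (gn x) ≠ 0 := ne_of_gt (hapos (gn x) hgnx)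
  have hgne : gn x ≠ 0 := h0
  -- LHS normalisation
  have hG1 : ∑ α, (∑ j, (deriv a (gn x) * pd j gn x * pd j (u α) x
        + a (gn x) * pd j (pd j (u α)) x)) ^ 2
      = (deriv a (gn x)) ^ 2 * (∑ α, (∑ j, pd j (u α) x * pd j gn x) ^ 2)
        + 2 * a (gn x) * deriv a (gn x) *
            (∑ α, (∑ k, pd k (pd k (u α)) x) * (∑ j, pd j (u α) x * pd j gn x))
        + (a (gn x)) ^ 2 * (∑ α, (∑ k, pd k (pd k (u α)) x) ^ 2) := by
    rw [Finset.mul_sum, Finset.mul_sum, Finset.mul_sum, ← Finset.sum_add_distrib,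
      ← Finset.sum_add_distrib]
    refine Finset.sum_congr rfl (fun α _ => ?_)
    have e1 : ∑ j, (deriv a (gn x) * pd j gn x * pd j (u α) x
          + a (gn x) * pd j (pd j (u α)) x)
        = deriv a (gn x) * (∑ j, pd j (u α) x * pd j gn x)
          + a (gn x) * (∑ j, pd j (pd j (u α)) x) := by
      rw [Finset.mul_sum, Finset.mul_sum, ← Finset.sum_add_distrib]
      exact Finset.sum_congr rfl (fun j _ => by ring)
    rw [e1]; ring
  -- divergence term normalisation
  have hE1sum : ∑ j, 2 * a (gn x) * (deriv a (gn x) * pd j gn x) *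
        ((∑ β, (∑ k, pd k (pd k (u β)) x) * pd j (u β) x)
          - 1 / 2 * (2 * gn x * pd j gn x))
      = 2 * a (gn x) * deriv a (gn x) *
          (∑ β, (∑ k, pd k (pd k (u β)) x) * (∑ j, pd j (u β) x * pd j gn x))
        - 2 * a (gn x) * deriv a (gn x) * gn x * (∑ j, (pd j gn x) ^ 2) := by
    have per : ∀ j, 2 * a (gn x) * (deriv a (gn x) * pd j gn x) *
          ((∑ β, (∑ k, pd k (pd k (u β)) x) * pd j (u β) x)
            - 1 / 2 * (2 * gn x * pd j gn x))
        = (∑ β, 2 * a (gn x) * deriv a (gn x) *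
            ((∑ k, pd k (pd k (u β)) x) * (pd j (u β) x * pd j gn x)))
          - 2 * a (gn x) * deriv a (gn x) * gn x * (pd j gn x) ^ 2 := by
      intro j
      rw [mul_sub, Finset.mul_sum]
      congr 1
      · exact Finset.sum_congr rfl (fun β _ => by ring)
      · ring
    simp only [per]
    rw [Finset.sum_sub_distrib, ← Finset.mul_sum]
    congr 1
    calc ∑ j, ∑ β, 2 * a (gn x) * deriv a (gn x) *
            ((∑ k, pd k (pd k (u β)) x) * (pd j (u β) x * pd j gn x))
        = ∑ β, ∑ j, 2 * a (gn x) * deriv a (gn x) *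
            ((∑ k, pd k (pd k (u β)) x) * (pd j (u β) x * pd j gn x)) := Finset.sum_comm
      _ = ∑ β, 2 * a (gn x) * deriv a (gn x) *
            ((∑ k, pd k (pd k (u β)) x) * ∑ j, (pd j (u β) x * pd j gn x)) := by
          exact Finset.sum_congr rfl (fun β _ => by
            rw [← Finset.mul_sum, ← Finset.mul_sum])
      _ = 2 * a (gn x) * deriv a (gn x) *
            ∑ β, ((∑ k, pd k (pd k (u β)) x) * ∑ j, (pd j (u β) x * pd j gn x)) := by
          rw [Finset.mul_sum]
  have hE2sum : ∑ j, (a (gn x)) ^ 2 *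
        ((∑ β, ((∑ k, pd j (pd k (pd k (u β))) x) * pd j (u β) x
            + (∑ k, pd k (pd k (u β)) x) * pd j (pd j (u β)) x))
          - 1 / 2 * (∑ β, ∑ k, (2 * pd j (pd k (u β)) x * pd j (pd k (u β)) x
              + 2 * pd k (u β) x * pd j (pd j (pd k (u β))) x)))
      = (a (gn x)) ^ 2 * (∑ β, (∑ k, pd k (pd k (u β)) x) ^ 2)
        - (a (gn x)) ^ 2 * (∑ β, ∑ j, ∑ k, (pd j (pd k (u β)) x) ^ 2) := by
    rw [← Finset.mul_sum, Finset.sum_sub_distrib, ← Finset.mul_sum]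
    have hU : ∑ j, ∑ β, ((∑ k, pd j (pd k (pd k (u β))) x) * pd j (u β) x
          + (∑ k, pd k (pd k (u β)) x) * pd j (pd j (u β)) x)
        = (∑ β, ∑ j, ∑ k, pd k (u β) x * pd j (pd j (pd k (u β))) x)
          + ∑ β, (∑ k, pd k (pd k (u β)) x) ^ 2 := by
      rw [Finset.sum_comm, ← Finset.sum_add_distrib]
      refine Finset.sum_congr rfl (fun β _ => ?_)
      rw [Finset.sum_add_distrib, F3 β]
      congr 1
      rw [← Finset.mul_sum, sq]
    have hV : ∑ j, ∑ β, ∑ k, (2 * pd j (pd k (u β)) x * pd j (pd k (u β)) x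
          + 2 * pd k (u β) x * pd j (pd j (pd k (u β))) x)
        = 2 * (∑ β, ∑ j, ∑ k, (pd j (pd k (u β)) x) ^ 2)
          + 2 * (∑ β, ∑ j, ∑ k, pd k (u β) x * pd j (pd j (pd k (u β))) x) := by
      rw [Finset.sum_comm, Finset.mul_sum, Finset.mul_sum, ← Finset.sum_add_distrib]
      refine Finset.sum_congr rfl (fun β _ => ?_)
      rw [Finset.mul_sum, Finset.mul_sum, ← Finset.sum_add_distrib]
      refine Finset.sum_congr rfl (fun j _ => ?_)
      rw [Finset.mul_sum, Finset.mul_sum, ← Finset.sum_add_distrib]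
      exact Finset.sum_congr rfl (fun k _ => by ring)
    rw [hU, hV]
    ring
  -- tail normalisation
  have hG3 : ∑ α, (∑ j, pd j (u α) x / gn x * pd j gn x) ^ 2
      = (∑ α, (∑ j, pd j (u α) x * pd j gn x) ^ 2) / (gn x) ^ 2 := by
    rw [Finset.sum_div]
    refine Finset.sum_congr rfl (fun α _ => ?_)
    rw [← div_pow]
    congr 1
    rw [Finset.sum_div]
    exact Finset.sum_congr rfl (fun j _ => div_mul_eq_mul_div _ _ _)
  rw [hG1, Finset.sum_add_distrib, hE1sum, hE2sum, hG3]
  field_simp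
  ring
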